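/- arXiv:0709.1627 — 2 statements merged into one kernel-verified Lean document; each statement's English description precedes it below -/
import Mathlib

section
/- Assume σ is a d-dimensional simplicial cone with primitive generators v_1, …, v_d ∈ ℤ^d, and let u_1, …, u_d ∈ ℤ^d be primitive vectors with ⟨u_i, v_j⟩ = l_i δ_{ij} for positive integers l_1, …, l_d, so that σ^∨ = ℝ_{≥0}u_1 + ⋯ + ℝ_{≥0}u_d. Let ω ∈ ℚ^d be the unique point with ⟨ω, v_j⟩ = 1 for all j. Let A ⊆ σ^∨ ∩ ℤ^d be finite and nonempty such that for each i = 1, …, d there exists a positive integer l with l·u_i ∈ A + (σ^∨ ∩ ℤ^d) (i.e. the corresponding monomial ideal has radical equal to the maximal monomial ideal m). If λ_A(ω)·P(A) ⊆ Q(m), then l_i = 1 for every i = 1, …, d (so that the associated toric ring is regular). -/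
open Finset Filter Pointwise

noncomputable section

namespace Paper

variable {d n : ℕ}

/-- The standard inner product pairing on `ℝ^d`. -/
def pair (u w : Fin d → ℝ) : ℝ := ∑ i, u i * w i

/-- The coercion `ℤ^d → ℝ^d`. -/
def toR (u : Fin d → ℤ) : Fin d → ℝ := fun i => (u i : ℝ)

/-- The cone generated by the integer vectors `v 1, …, v n`. -/
def cone (v : Fin n → Fin d → ℤ) : Set (Fin d → ℝ) :=
  {x | ∃ c : Fin n → ℝ, (∀ j, 0 ≤ c j) ∧ x = ∑ j, c j • toR (v j)}

/-- The dual cone `σ^∨ = {u | ⟨u, x⟩ ≥ 0 for all x ∈ σ}`. -/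
def dualCone (v : Fin n → Fin d → ℤ) : Set (Fin d → ℝ) :=
  {u | ∀ x ∈ cone v, 0 ≤ pair u x}

/-- Strong convexity of the cone generated by `v`. -/
def StronglyConvex (v : Fin n → Fin d → ℤ) : Prop :=
  ∀ x ∈ cone v, -x ∈ cone v → x = 0

/-- An integer vector is primitive if the gcd of its coordinates is 1. -/
def IsPrimitive (w : Fin d → ℤ) : Prop := Finset.univ.gcd w = 1

/-- The cone generated by `v` is `d`-dimensional. -/
def FullDim (v : Fin n → Fin d → ℤ) : Prop :=
  Submodule.span ℝ (Set.range fun j => toR (v j)) = ⊤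

/-- The Newton polyhedron `P(A) = conv(A) + σ^∨`. -/
def newton (v : Fin n → Fin d → ℤ) (A : Finset (Fin d → ℤ)) : Set (Fin d → ℝ) :=
  convexHull ℝ (toR '' ↑A) + dualCone v

/-- The set `Q(A) = ⋃_{a ∈ A} (a + σ^∨)`. -/
def QSet (v : Fin n → Fin d → ℤ) (A : Finset (Fin d → ℤ)) : Set (Fin d → ℝ) :=
  ⋃ a ∈ A, (toR a +ᵥ dualCone v)

/-- `λ_A(u) = sup {λ > 0 | u ∈ λ·P(A)}` (and `0` if no such `λ` exists;
note `Real.sSup` of the empty set is `0`). -/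
def lam (v : Fin n → Fin d → ℤ) (A : Finset (Fin d → ℤ)) (u : Fin d → ℝ) : ℝ :=
  sSup {l : ℝ | 0 < l ∧ u ∈ l • newton v A}

/-- `Q(m)` for the maximal monomial ideal, whose exponent set is
`(σ^∨ ∩ ℤ^d) \ {0}`. -/
def Qm (v : Fin n → Fin d → ℤ) : Set (Fin d → ℝ) :=
  ⋃ a ∈ {a : Fin d → ℤ | toR a ∈ dualCone v ∧ a ≠ 0}, (toR a +ᵥ dualCone v)

/-- The set `O = {u ∈ σ^∨ | ⟨u, v_j⟩ ≥ 1 for some j}`. -/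
def OSet (v : Fin n → Fin d → ℤ) : Set (Fin d → ℝ) :=
  {u ∈ dualCone v | ∃ j, 1 ≤ pair u (toR (v j))}


/-! ### Auxiliary lemmas -/

lemma pair_add_left (x y z : Fin d → ℝ) : pair (x + y) z = pair x z + pair y z := by
  simp [pair, add_mul, Finset.sum_add_distrib]

lemma pair_smul_left (c : ℝ) (x z : Fin d → ℝ) : pair (c • x) z = c * pair x z := by
  simp [pair, Finset.mul_sum, mul_assoc]

lemma pair_sub_left (x y z : Fin d → ℝ) : pair (x - y) z = pair x z - pair y z := by
  simp [pair, sub_mul, Finset.sum_sub_distrib]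

lemma pair_zero_left (z : Fin d → ℝ) : pair 0 z = 0 := by simp [pair]

lemma pair_add_right (x a b : Fin d → ℝ) : pair x (a + b) = pair x a + pair x b := by
  simp [pair, mul_add, Finset.sum_add_distrib]

lemma pair_smul_right (c : ℝ) (x z : Fin d → ℝ) : pair x (c • z) = c * pair x z := by
  simp only [pair, Pi.smul_apply, smul_eq_mul, Finset.mul_sum]
  exact Finset.sum_congr rfl fun i _ => by ring

lemma pair_sum_right (x : Fin d → ℝ) (f : Fin n → Fin d → ℝ) :
    pair x (∑ j, f j) = ∑ j, pair x (f j) := by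
  simp only [pair, Finset.sum_apply, Finset.mul_sum]
  exact Finset.sum_comm

lemma toR_sub (x y : Fin d → ℤ) : toR (x - y) = toR x - toR y := by
  funext i; simp [toR]

lemma toR_zsmul (m : ℤ) (x : Fin d → ℤ) : toR (m • x) = (m : ℝ) • toR x := by
  funext i; simp [toR]

lemma toR_eq_zero {x : Fin d → ℤ} (h : toR x = 0) : x = 0 := by
  funext i
  have := congrFun h i
  simp [toR] at this
  exact_mod_cast this

lemma pair_toR_int (a b : Fin d → ℤ) :
    pair (toR a) (toR b) = ((∑ i, a i * b i : ℤ) : ℝ) := by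
  simp [pair, toR]

lemma gen_mem_cone (v : Fin n → Fin d → ℤ) (j : Fin n) : toR (v j) ∈ cone v := by
  refine ⟨fun j' => if j' = j then 1 else 0, fun j' => by positivity, ?_⟩
  simp [ite_smul]

lemma mem_dualCone_iff (v : Fin n → Fin d → ℤ) (x : Fin d → ℝ) :
    x ∈ dualCone v ↔ ∀ j, 0 ≤ pair x (toR (v j)) := by
  constructor
  · exact fun hx j => hx _ (gen_mem_cone v j)
  · rintro h y ⟨c, hc, rfl⟩
    rw [pair_sum_right]
    exact Finset.sum_nonneg fun j _ => by
      rw [pair_smul_right]; exact mul_nonneg (hc j) (h j)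

lemma dualCone_convex (v : Fin n → Fin d → ℤ) : Convex ℝ (dualCone v) := by
  intro x hx y hy a b ha hb _
  intro z hz
  rw [pair_add_left, pair_smul_left, pair_smul_left]
  exact add_nonneg (mul_nonneg ha (hx z hz)) (mul_nonneg hb (hy z hz))

lemma zero_mem_dualCone (v : Fin n → Fin d → ℤ) : (0 : Fin d → ℝ) ∈ dualCone v := by
  intro z _; rw [pair_zero_left]

/-- If `x` pairs to zero with a spanning linearly independent family, then `x = 0`. -/
lemma eq_zero_of_pair_eq_zero {v : Fin d → Fin d → ℤ}
    (hli : LinearIndependent ℝ fun j => toR (v j)) {x : Fin d → ℝ}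
    (h : ∀ j, pair x (toR (v j)) = 0) : x = 0 := by
  rcases Nat.eq_zero_or_pos d with hd | hd
  · funext i; exact absurd i.2 (by omega)
  have : Nonempty (Fin d) := ⟨⟨0, hd⟩⟩
  have hspan : Submodule.span ℝ (Set.range fun j => toR (v j)) = ⊤ :=
    hli.span_eq_top_of_card_eq_finrank (by simp [Module.finrank_fin_fun])
  have hall : ∀ y : Fin d → ℝ, pair x y = 0 := by
    intro y
    have hy : y ∈ Submodule.span ℝ (Set.range fun j => toR (v j)) := hspan ▸ Submodule.mem_top
    induction hy using Submodule.span_induction with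
    | mem z hz => obtain ⟨j, rfl⟩ := hz; exact h j
    | zero => simp [pair]
    | add a b _ _ ha hb => rw [pair_add_right, ha, hb, add_zero]
    | smul c a _ ha => rw [pair_smul_right, ha, mul_zero]
  have hx : pair x x = 0 := hall x
  funext i
  have h2 : ∀ i ∈ Finset.univ, x i * x i = 0 :=
    (Finset.sum_eq_zero_iff_of_nonneg fun i _ => mul_self_nonneg _).1 hx
  exact mul_self_eq_zero.mp (h2 i (Finset.mem_univ i))

/-- A real multiple of a primitive integer vector that is integral is an
integer multiple. -/
lemma primitive_scale {w : Fin d → ℤ} (hw : IsPrimitive w) {b : Fin d → ℤ} {c : ℝ}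
    (h : toR b = c • toR w) : ∃ m : ℤ, b = m • w := by
  obtain ⟨j0, hj0⟩ : ∃ j0, w j0 ≠ 0 := by
    by_contra hc
    push_neg at hc
    have h0 : Finset.univ.gcd w = 0 := Finset.gcd_eq_zero_iff.mpr fun i _ => hc i
    rw [IsPrimitive] at hw
    rw [h0] at hw
    exact absurd hw (by norm_num)
  have hcomp : ∀ j, (b j : ℝ) = c * (w j : ℝ) := by
    intro j
    have := congrFun h j
    simpa [toR] using this
  have key : ∀ j, b j * w j0 = b j0 * w j := by
    intro j
    have : ((b j * w j0 : ℤ) : ℝ) = ((b j0 * w j : ℤ) : ℝ) := by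
      push_cast
      rw [hcomp j, hcomp j0]; ring
    exact_mod_cast this
  have hdvd : w j0 ∣ b j0 := by
    have h1 : w j0 ∣ Finset.univ.gcd (fun j => b j0 * w j) :=
      Finset.dvd_gcd fun j _ => ⟨b j, by rw [← key j]; ring⟩
    rw [Finset.gcd_mul_left, hw, mul_one] at h1
    exact dvd_normalize_iff.mp h1
  refine ⟨b j0 / w j0, funext fun j => ?_⟩
  have hm : b j0 / w j0 * w j0 = b j0 := Int.ediv_mul_cancel hdvd
  have : (b j - b j0 / w j0 * w j) * w j0 = 0 := by
    have expand : (b j - b j0 / w j0 * w j) * w j0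
        = b j * w j0 - (b j0 / w j0 * w j0) * w j := by ring
    rw [expand, hm, key j]
    ring
  have := mul_eq_zero.mp this
  rcases this with h' | h'
  · have : b j = b j0 / w j0 * w j := by linarith
    simpa using this
  · exact absurd h' hj0

/-- Any vector orthogonal to all `v j`, `j ≠ i`, is a multiple of `u i`. -/
lemma axis_rep {v u : Fin d → Fin d → ℤ} {l : Fin d → ℤ}
    (hli : LinearIndependent ℝ fun j => toR (v j))
    (hl : ∀ i, 0 < l i)
    (hpairing : ∀ i j, pair (toR (u i)) (toR (v j)) = if i = j then (l i : ℝ) else 0)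
    {i : Fin d} {x : Fin d → ℝ}
    (hx : ∀ j, j ≠ i → pair x (toR (v j)) = 0) :
    x = (pair x (toR (v i)) / (l i : ℝ)) • toR (u i) := by
  have hli0 : (0 : ℝ) < (l i : ℝ) := by exact_mod_cast hl i
  have h0 : x - (pair x (toR (v i)) / (l i : ℝ)) • toR (u i) = 0 := by
    apply eq_zero_of_pair_eq_zero hli
    intro j
    rw [pair_sub_left, pair_smul_left, hpairing]
    by_cases hij : i = j
    · subst hij
      rw [if_pos rfl]
      field_simp; ring
    · rw [if_neg hij, mul_zero, hx j (fun hji => hij hji.symm), sub_zero]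
  exact sub_eq_zero.mp h0

/-- Unpack membership in `Qm`. -/
lemma qm_unpack {v : Fin n → Fin d → ℤ} {x : Fin d → ℝ} (hx : x ∈ Qm v) :
    ∃ b : Fin d → ℤ, b ≠ 0 ∧ toR b ∈ dualCone v ∧ x - toR b ∈ dualCone v := by
  rw [Qm, Set.mem_iUnion₂] at hx
  obtain ⟨b, ⟨hbd, hb0⟩, hxb⟩ := hx
  obtain ⟨y, hy, hyx⟩ := hxb
  refine ⟨b, hb0, hbd, ?_⟩
  have : x - toR b = y := by
    rw [← hyx]
    show toR b + y - toR b = y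
    abel
  rwa [this]


/-- regularity criterion for simplicial toric rings.  If
`λ_A(ω)·P(A) ⊆ Q(m)` (i.e. `c(a) = c^m(a)` for the monomial ideal `a` with
exponent set `A`, `√a = m`), then every `l_i = 1`. -/
theorem simplicial_regularity_criterion
    (d : ℕ) (hd : 1 ≤ d)
    (v : Fin d → Fin d → ℤ)
    (hprim : ∀ j, IsPrimitive (v j))
    (hli : LinearIndependent ℝ fun j => toR (v j))
    (u : Fin d → Fin d → ℤ) (huprim : ∀ i, IsPrimitive (u i))
    (l : Fin d → ℤ) (hl : ∀ i, 0 < l i)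
    (hpairing : ∀ i j, pair (toR (u i)) (toR (v j)) = if i = j then (l i : ℝ) else 0)
    (hdual : dualCone v = cone u)
    (ω : Fin d → ℚ)
    (hω : ∀ j, pair (fun i => (ω i : ℝ)) (toR (v j)) = 1)
    (A : Finset (Fin d → ℤ)) (hAne : A.Nonempty)
    (hAl : ∀ a ∈ A, toR a ∈ dualCone v)
    (hArad : ∀ i, ∃ m : ℕ, 0 < m ∧ ∃ a ∈ A, toR ((m : ℤ) • u i - a) ∈ dualCone v)
    (hthr : lam v A (fun i => (ω i : ℝ)) • newton v A ⊆ Qm v) :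
    ∀ i, l i = 1 := by
  classical
  set ωR : Fin d → ℝ := fun i => (ω i : ℝ) with hωRdef
  set S : Set ℝ := {t : ℝ | 0 < t ∧ ωR ∈ t • newton v A} with hSdef
  have hlamS : lam v A ωR = sSup S := rfl
  have hNconv : Convex ℝ (newton v A) := (convex_convexHull ℝ _).add (dualCone_convex v)
  have hmemN : ∀ a ∈ A, toR a ∈ newton v A := by
    intro a ha
    have h1 : toR a ∈ convexHull ℝ (toR '' ↑A) :=
      subset_convexHull ℝ _ ⟨a, by simpa using ha, rfl⟩
    have := Set.add_mem_add h1 (zero_mem_dualCone v)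
    simpa [newton] using this
  have hNne : (newton v A).Nonempty := hAne.elim fun a ha => ⟨toR a, hmemN a ha⟩
  by_cases h0A : (0 : Fin d → ℤ) ∈ A
  · exfalso
    have hSall : ∀ t : ℝ, 0 < t → t ∈ S := by
      intro t ht
      refine ⟨ht, ?_⟩
      rw [Set.mem_smul_set]
      refine ⟨t⁻¹ • ωR, ?_, by rw [smul_smul, mul_inv_cancel₀ (ne_of_gt ht), one_smul]⟩
      have h1 : (0 : Fin d → ℝ) ∈ convexHull ℝ (toR '' ↑A) :=
        subset_convexHull ℝ _ ⟨0, by simpa using h0A, by funext k; simp [toR]⟩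
      have h2 : t⁻¹ • ωR ∈ dualCone v := by
        rw [mem_dualCone_iff]
        intro j
        rw [pair_smul_left, hω j]
        positivity
      have := Set.add_mem_add h1 h2
      simpa [newton] using this
    have hnb : ¬ BddAbove S := by
      rintro ⟨B, hB⟩
      have h1 := hB (hSall (max B 0 + 1) (by positivity))
      have h2 : B ≤ max B 0 := le_max_left _ _
      try simp only [upperBounds, Set.mem_setOf_eq] at h1
      linarith
    have hsup0 : sSup S = 0 := Real.sSup_of_not_bddAbove hnb
    have hthr' : sSup S • newton v A ⊆ Qm v := by rw [← hlamS]; exact hthr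
    have h0mem : (0 : Fin d → ℝ) ∈ Qm v := by
      apply hthr'
      rw [hsup0, Set.zero_smul_set hNne]
      exact Set.zero_mem_zero
    obtain ⟨b, hb0, hbd, hbd2⟩ := qm_unpack h0mem
    have hz : ∀ j, pair (toR b) (toR (v j)) = 0 := by
      intro j
      have h1 := (mem_dualCone_iff v _).1 hbd j
      have h2 := (mem_dualCone_iff v _).1 hbd2 j
      rw [pair_sub_left, pair_zero_left] at h2
      linarith
    exact hb0 (toR_eq_zero (eq_zero_of_pair_eq_zero hli hz))
  · intro i
    by_contra hne
    have hl2 : (2 : ℤ) ≤ l i := by have := hl i; omega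
    have hl2R : (2 : ℝ) ≤ (l i : ℝ) := by exact_mod_cast hl2
    have hliR : (0 : ℝ) < (l i : ℝ) := by exact_mod_cast hl i
    obtain ⟨a0, ha0⟩ := hAne
    have hSne : S.Nonempty := by
      set M : ℝ := (∑ j, pair (toR a0) (toR (v j))) + 1 with hM
      have hMterms : ∀ j, 0 ≤ pair (toR a0) (toR (v j)) :=
        (mem_dualCone_iff v _).1 (hAl a0 ha0)
      have hMsum : 0 ≤ ∑ j, pair (toR a0) (toR (v j)) :=
        Finset.sum_nonneg fun j _ => hMterms j
      have hM0 : 0 < M := by rw [hM]; linarith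
      refine ⟨M⁻¹, by positivity, ?_⟩
      rw [Set.mem_smul_set]
      refine ⟨M • ωR, ?_, by rw [smul_smul, inv_mul_cancel₀ (ne_of_gt hM0), one_smul]⟩
      have h1 : toR a0 ∈ convexHull ℝ (toR '' ↑A) :=
        subset_convexHull ℝ _ ⟨a0, by simpa using ha0, rfl⟩
      have h2 : M • ωR - toR a0 ∈ dualCone v := by
        rw [mem_dualCone_iff]
        intro j
        rw [pair_sub_left, pair_smul_left, hω j, mul_one]
        have h3 : pair (toR a0) (toR (v j)) ≤ M - 1 := by
          rw [hM]
          have := Finset.single_le_sum (fun k _ => hMterms k) (Finset.mem_univ j)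
          linarith
        linarith
      have := Set.add_mem_add h1 h2
      simpa [newton] using this
    have hFone : ∀ a ∈ A, (1:ℝ) ≤ ∑ j, pair (toR a) (toR (v j)) := by
      intro a ha
      have hterms : ∀ j, 0 ≤ pair (toR a) (toR (v j)) := (mem_dualCone_iff v _).1 (hAl a ha)
      set nZ : Fin d → ℤ := fun j => ∑ k, a k * (v j) k with hnZ
      have hcast : ∀ j, pair (toR a) (toR (v j)) = ((nZ j : ℤ) : ℝ) := fun j => pair_toR_int a (v j)
      by_contra hlt
      push_neg at hlt
      have hnn : ∀ j, 0 ≤ nZ j := by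
        intro j
        have := hterms j
        rw [hcast j] at this
        exact_mod_cast this
      have hsumlt : ((∑ j, nZ j : ℤ) : ℝ) < 1 := by
        push_cast
        calc (∑ j, ((nZ j : ℤ):ℝ)) = ∑ j, pair (toR a) (toR (v j)) :=
              Finset.sum_congr rfl fun j _ => (hcast j).symm
          _ < 1 := hlt
      have hsum0 : ∑ j, nZ j = 0 := by
        have h5 : (∑ j, nZ j : ℤ) < 1 := by exact_mod_cast hsumlt
        have h6 : 0 ≤ (∑ j, nZ j : ℤ) := Finset.sum_nonneg fun j _ => hnn j
        omega
      have hall0 : ∀ j, pair (toR a) (toR (v j)) = 0 := by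
        intro j
        have := (Finset.sum_eq_zero_iff_of_nonneg fun j _ => hnn j).1 hsum0 j (Finset.mem_univ j)
        rw [hcast j, this, Int.cast_zero]
      have : a = 0 := toR_eq_zero (eq_zero_of_pair_eq_zero hli hall0)
      exact h0A (this ▸ ha)
    have hbdd : BddAbove S := by
      refine ⟨(d:ℝ), ?_⟩
      rintro t ⟨ht0, hmem⟩
      obtain ⟨y, hyN, hty⟩ := Set.mem_smul_set.mp hmem
      obtain ⟨yc, hyc, ys, hys, heq⟩ := Set.mem_add.mp hyN
      have hC : convexHull ℝ (toR '' ↑A) ⊆ {z : Fin d → ℝ | 1 ≤ ∑ j, pair z (toR (v j))} := by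
        apply convexHull_min
        · rintro z ⟨a, haA', rfl⟩
          exact hFone a (by simpa using haA')
        · intro p hp q hq α β hα hβ hαβ
          have hexp : ∑ j, pair (α • p + β • q) (toR (v j))
              = α * ∑ j, pair p (toR (v j)) + β * ∑ j, pair q (toR (v j)) := by
            rw [Finset.mul_sum, Finset.mul_sum, ← Finset.sum_add_distrib]
            exact Finset.sum_congr rfl fun j _ => by
              rw [pair_add_left, pair_smul_left, pair_smul_left]
          simp only [Set.mem_setOf_eq] at hp hq ⊢
          rw [hexp]
          nlinarith
      have hyc1 : 1 ≤ ∑ j, pair yc (toR (v j)) := hC hyc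
      have hys0 : 0 ≤ ∑ j, pair ys (toR (v j)) :=
        Finset.sum_nonneg fun j _ => (mem_dualCone_iff v _).1 hys j
      have hωsum : ∑ j, pair ωR (toR (v j)) = (d:ℝ) := by simp [hω]
      have hcomp : (d:ℝ) = t * (∑ j, pair yc (toR (v j)) + ∑ j, pair ys (toR (v j))) := by
        rw [← hωsum, ← hty, ← heq]
        have hterm : ∀ j, pair (t • (yc + ys)) (toR (v j))
            = t * pair yc (toR (v j)) + t * pair ys (toR (v j)) := fun j => by
          rw [pair_smul_left, pair_add_left]; ring
        rw [Finset.sum_congr rfl fun j _ => hterm j, Finset.sum_add_distrib,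
          ← Finset.mul_sum, ← Finset.mul_sum]
        ring
      nlinarith
    set lamv : ℝ := sSup S with hlamv
    obtain ⟨t0, ht0S⟩ := hSne
    have hlampos : 0 < lamv := lt_of_lt_of_le ht0S.1 (le_csSup hbdd ht0S)
    obtain ⟨m, hm, a, haA, hcond⟩ := hArad i
    have haxis : ∀ j, j ≠ i → pair (toR a) (toR (v j)) = 0 := by
      intro j hji
      have h1 := (mem_dualCone_iff v _).1 hcond j
      rw [toR_sub, toR_zsmul, pair_sub_left, pair_smul_left, hpairing,
        if_neg (fun h : i = j => hji h.symm)] at h1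
      have h2 := (mem_dualCone_iff v _).1 (hAl a haA) j
      linarith
    set K : ℝ := pair (toR a) (toR (v i)) with hK
    have hK0 : 0 ≤ K := (mem_dualCone_iff v _).1 (hAl a haA) i
    set s : ℝ := min (1/2) (1/(2*(lamv*K+1))) with hs
    have hsden : 0 < 2*(lamv*K+1) := by nlinarith
    have hs0 : 0 < s := lt_min (by norm_num) (by positivity)
    have hs12 : s ≤ 1/2 := min_le_left _ _
    have hsK : s * (lamv * K) < 1/2 := by
      have h1 : s ≤ 1/(2*(lamv*K+1)) := min_le_right _ _
      have h2 : 0 ≤ lamv * K := by positivity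
      have h3 : s * (lamv*K) ≤ (1/(2*(lamv*K+1))) * (lamv*K) :=
        mul_le_mul_of_nonneg_right h1 h2
      have h4 : (1/(2*(lamv*K+1))) * (lamv*K) < 1/2 := by
        rw [div_mul_eq_mul_div, one_mul, div_lt_iff₀ hsden]
        nlinarith
      linarith
    obtain ⟨t', ht'S, ht'gt⟩ := exists_lt_of_lt_csSup ⟨t0, ht0S⟩
      (show lamv*(1-s) < lamv by nlinarith)
    have ht'pos : 0 < t' := ht'S.1
    obtain ⟨y, hyN, hty⟩ := Set.mem_smul_set.mp ht'S.2
    set x : Fin d → ℝ := (1-s) • (lamv • y) + s • (lamv • toR a) with hxdef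
    have hxmem : x ∈ lamv • newton v A := by
      have hconv : Convex ℝ (lamv • newton v A) := hNconv.smul lamv
      rw [hxdef]
      exact hconv (Set.smul_mem_smul_set hyN) (Set.smul_mem_smul_set (hmemN a haA))
        (by linarith) (le_of_lt hs0) (by ring)
    have hxQ : x ∈ Qm v := by
      have hthr' : lamv • newton v A ⊆ Qm v := by rw [← hlamS]; exact hthr
      exact hthr' hxmem
    have hyv : ∀ j, pair y (toR (v j)) = 1 / t' := by
      intro j
      have h := congrArg (fun z => pair z (toR (v j))) hty
      beta_reduce at h
      rw [pair_smul_left, hω j] at h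
      rw [eq_div_iff (ne_of_gt ht'pos)]
      linarith
    have px : ∀ j, pair x (toR (v j))
        = (1-s)*(lamv/t') + s*(lamv * pair (toR a) (toR (v j))) := by
      intro j
      rw [hxdef, pair_add_left, pair_smul_left, pair_smul_left, pair_smul_left,
        pair_smul_left, hyv j]
      ring
    have hc1lt : (1-s)*(lamv/t') < 1 := by
      have h1 : (1-s)*(lamv/t') = ((1-s)*lamv)/t' := by ring
      rw [h1, div_lt_one ht'pos, mul_comm (1-s) lamv]
      exact ht'gt
    have hc1nn : 0 ≤ (1-s)*(lamv/t') := by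
      have h1 : 0 ≤ 1 - s := by linarith
      have h2 : 0 ≤ lamv/t' := by positivity
      exact mul_nonneg h1 h2
    obtain ⟨b, hb0, hbd, hbd2⟩ := qm_unpack hxQ
    have hbj0 : ∀ j, j ≠ i → pair (toR b) (toR (v j)) = 0 := by
      intro j hji
      have h1 := (mem_dualCone_iff v _).1 hbd j
      have h2 := (mem_dualCone_iff v _).1 hbd2 j
      rw [pair_sub_left] at h2
      have h3 : pair (toR b) (toR (v j)) ≤ pair x (toR (v j)) := by linarith
      rw [px j, haxis j hji, mul_zero, mul_zero, add_zero] at h3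
      have hint := pair_toR_int b (v j)
      have hz : (∑ k, b k * (v j) k : ℤ) = 0 := by
        have hlt : ((∑ k, b k * (v j) k : ℤ) : ℝ) < 1 := by rw [← hint]; linarith
        have hge : (0:ℝ) ≤ ((∑ k, b k * (v j) k : ℤ) : ℝ) := by rw [← hint]; exact h1
        have h5 : (∑ k, b k * (v j) k : ℤ) < 1 := by exact_mod_cast hlt
        have h6 : (0:ℤ) ≤ (∑ k, b k * (v j) k : ℤ) := by exact_mod_cast hge
        omega
      rw [hint, hz, Int.cast_zero]
    have hrep := axis_rep hli hl hpairing (i := i) (x := toR b) hbj0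
    obtain ⟨mB, hmB⟩ := primitive_scale (huprim i) hrep
    have hmB0 : mB ≠ 0 := by
      rintro rfl
      simp only [zero_smul] at hmB
      exact hb0 hmB
    have hbvi : pair (toR b) (toR (v i)) = (mB : ℝ) * (l i : ℝ) := by
      rw [hmB, toR_zsmul, pair_smul_left, hpairing, if_pos rfl]
    have hbvinn : (0:ℝ) ≤ (mB:ℝ) * (l i:ℝ) := by
      rw [← hbvi]; exact (mem_dualCone_iff v _).1 hbd i
    have hmB1 : (1:ℝ) ≤ (mB:ℝ) := by
      have hpos : (0:ℤ) < mB := by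
        by_contra hc
        push_neg at hc
        have hneg : mB ≤ -1 := by omega
        have hnegR : (mB:ℝ) ≤ -1 := by exact_mod_cast hneg
        nlinarith
      exact_mod_cast hpos
    have hfin1 : pair (toR b) (toR (v i)) ≤ pair x (toR (v i)) := by
      have h2 := (mem_dualCone_iff v _).1 hbd2 i
      rw [pair_sub_left] at h2
      linarith
    rw [px i, ← hK, hbvi] at hfin1
    nlinarith [mul_le_mul_of_nonneg_right hmB1 (le_of_lt hliR)]

end Paper
end
end

section
/- Let a, b ∈ ℤ with b > 0, a > 1 and gcd(a, b) = 1, and let σ := ℝ_{≥0}(1,0) + ℝ_{≥0}(a,b) ⊆ ℝ², so that σ^∨ = ℝ_{≥0}(0,1) + ℝ_{≥0}(b,−a). Let ω := (1, (1−a)/b) ∈ σ^∨, which satisfies ⟨ω,(1,0)⟩ = ⟨ω,(a,b)⟩ = 1. If ω ∈ Q(m), i.e. there exists u ∈ (σ^∨ ∩ ℤ²) \ {0} with ω − u ∈ σ^∨, then b divides 1 − a; in particular ω ∈ ℤ². -/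
open Finset Filter Pointwise

noncomputable section

namespace Paper

variable {d n : ℕ}

/-- for `σ = ℝ_{≥0}(1,0) + ℝ_{≥0}(a,b)` with `b > 0`, `a > 1`,
`gcd(a,b) = 1` and `ω = (1, (1-a)/b)`, if `ω ∈ Q(m)` then `b ∣ 1 - a`;
in particular `ω` is a lattice point. -/
theorem dim_two_omega_in_Qm
    (a b : ℤ) (hb : 0 < b) (ha : 1 < a) (hgcd : Int.gcd a b = 1)
    (v : Fin 2 → Fin 2 → ℤ) (hv : v = ![![1, 0], ![a, b]])
    (ω : Fin 2 → ℝ) (hω : ω = ![1, ((1 - a : ℤ) : ℝ) / (b : ℝ)])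
    (hmem : ω ∈ Qm v) :
    b ∣ (1 - a) ∧ ∃ z : Fin 2 → ℤ, ω = toR z := by
  rw [Qm, Set.mem_iUnion₂] at hmem
  obtain ⟨u, ⟨hudual, hune⟩, hωu⟩ := hmem
  rw [Set.mem_vadd_set] at hωu
  obtain ⟨y, hy, hyeq⟩ := hωu
  have hb' : (b : ℝ) ≠ 0 := by positivity
  have hy' : y = fun i => ω i - (u i : ℝ) := by
    funext i
    have := congrFun hyeq i
    simp only [vadd_eq_add, Pi.add_apply, toR] at this
    linarith
  have h1 := hudual _ (gen_mem_cone v 0)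
  have h2 := hudual _ (gen_mem_cone v 1)
  have h3 := hy _ (gen_mem_cone v 0)
  have h4 := hy _ (gen_mem_cone v 1)
  simp only [pair, toR, Fin.sum_univ_two, hv, hy', hω, Matrix.cons_val_zero,
    Matrix.cons_val_one, Matrix.head_cons, Int.cast_one, Int.cast_zero,
    Matrix.head_fin_const] at h1 h2 h3 h4
  have hcancel : ((1 - a : ℤ) : ℝ) / (b : ℝ) * (b : ℝ) = ((1 - a : ℤ) : ℝ) :=
    div_mul_cancel₀ _ hb'
  have hu0 : 0 ≤ u 0 := by
    have : (0 : ℝ) ≤ (u 0 : ℝ) := by linarith [h1]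
    exact_mod_cast this
  have hu0' : u 0 ≤ 1 := by
    have : (u 0 : ℝ) ≤ 1 := by linarith [h3]
    exact_mod_cast this
  have hs0 : 0 ≤ a * u 0 + b * u 1 := by
    have : (0 : ℝ) ≤ (a : ℝ) * (u 0 : ℝ) + (b : ℝ) * (u 1 : ℝ) := by nlinarith [h2]
    exact_mod_cast this
  have hs1 : a * u 0 + b * u 1 ≤ 1 := by
    have h4' : (1 - (u 0 : ℝ)) * (a : ℝ) + (((1 - a : ℤ) : ℝ) / (b : ℝ) - (u 1 : ℝ)) * (b : ℝ)
        = (a : ℝ) - (a : ℝ) * (u 0 : ℝ) + ((1 - a : ℤ) : ℝ) - (u 1 : ℝ) * (b : ℝ) := by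
      rw [sub_mul, sub_mul, hcancel]; ring
    rw [h4'] at h4
    have hr : (a : ℝ) * (u 0 : ℝ) + (b : ℝ) * (u 1 : ℝ) ≤ 1 := by
      push_cast at h4 ⊢
      linarith
    exact_mod_cast hr
  have hdvd : b ∣ (1 - a) := by
    interval_cases h : u 0
    · -- u 0 = 0
      have hu1 : u 1 ≠ 0 := by
        intro h1'
        apply hune
        funext i
        fin_cases i <;> simp [h, h1']
      simp only [mul_zero, zero_add] at hs0 hs1
      have hu1pos : 1 ≤ u 1 := by
        rcases lt_or_ge (u 1) 0 with hneg | hpos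
        · nlinarith
        · omega
      have hb1 : b = 1 := by nlinarith
      simp [hb1]
    · -- u 0 = 1
      simp only [mul_one] at hs0 hs1
      rcases (by omega : a + b * u 1 = 0 ∨ a + b * u 1 = 1) with h0 | h0
      · have hba : b ∣ a := ⟨-u 1, by rw [mul_neg]; linarith⟩
        have : IsUnit b := (Int.isCoprime_iff_gcd_eq_one.mpr hgcd).isUnit_of_dvd' hba dvd_rfl
        have hb1 : b = 1 := by
          rcases Int.isUnit_iff.mp this with h' | h' <;> omega
        simp [hb1]
      · exact ⟨u 1, by linarith⟩
  refine ⟨hdvd, ?_⟩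
  obtain ⟨k, hk⟩ := hdvd
  refine ⟨![1, k], ?_⟩
  funext i
  fin_cases i
  · simp [hω, toR]
  · simp only [hω, toR, Matrix.cons_val_one, Matrix.head_cons]
    rw [hk]
    push_cast
    field_simp


end Paper
end
end
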